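/- arXiv:2601.07730 — 4 statements merged into one kernel-verified Lean document; each statement's English description precedes it below -/
import Mathlib

section
/- For every real k, if |1 + iy + k(iy)²| ≤ 1 for all y ∈ [0, Y] with Y > 0, then Y ≤ 1. Moreover, for k = 1 the bound is attained: |1 + iy − y²| ≤ 1 for all y ∈ [0, 1]. -/
open Complex

lemma my_normSq1 (k y : ℝ) :
    Complex.normSq (1 + I * y + k * (I * y)^2) = (1 - k * y^2)^2 + y^2 := by
  simp [Complex.normSq_apply, Complex.ext_iff, mul_pow, I_sq, ← Complex.ofReal_pow]
  ring

lemma my_normSq2 (y : ℝ) :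
    Complex.normSq (1 + I * y - (y:ℂ)^2) = (1 - y^2)^2 + y^2 := by
  simp [Complex.normSq_apply, Complex.ext_iff, ← Complex.ofReal_pow]
  ring

lemma abs_le_one_iff (z : ℂ) : ‖z‖ ≤ 1 ↔ Complex.normSq z ≤ 1 := by
  rw [Complex.norm_def]
  constructor
  · intro h
    have := Real.sq_sqrt (Complex.normSq_nonneg z)
    nlinarith [Real.sqrt_nonneg (Complex.normSq z)]
  · intro h
    calc Real.sqrt (Complex.normSq z) ≤ Real.sqrt 1 := Real.sqrt_le_sqrt h
    _ = 1 := Real.sqrt_one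

theorem optimal_real_coefficient :
    (∀ k Y : ℝ, 0 < Y →
      (∀ y : ℝ, y ∈ Set.Icc 0 Y → ‖(1 + I * y + k * (I * y)^2 : ℂ)‖ ≤ 1) → Y ≤ 1) ∧
      ∀ y : ℝ, y ∈ Set.Icc (0:ℝ) 1 → ‖(1 + I * y - y^2 : ℂ)‖ ≤ 1 := by
  constructor
  · intro k Y hY h
    have hYmem : Y ∈ Set.Icc (0:ℝ) Y := ⟨le_of_lt hY, le_refl _⟩
    have := (abs_le_one_iff _).mp (h Y hYmem)
    rw [my_normSq1] at this
    -- (1 - k Y²)² + Y² ≤ 1  ⇒  k²Y⁴ - 2kY² + Y² ≤ 0 ⇒ k²Y² ≤ 2k - 1 ≤ k² ⇒ Y ≤ 1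
    nlinarith [sq_nonneg (k - 1), sq_nonneg k, sq_nonneg Y, sq_nonneg (k*Y), sq_nonneg (k*Y*Y), mul_pos hY hY, sq_nonneg (Y-1), sq_nonneg (Y+1)]
  · intro y hy
    rw [abs_le_one_iff, my_normSq2]
    obtain ⟨h0, h1⟩ := hy
    have hsq : y^2 ≤ 1 := by nlinarith
    nlinarith [sq_nonneg y, mul_nonneg (sq_nonneg y) (sub_nonneg.mpr hsq)]
end

section
/- With the complex coefficient k = 1/2 + i/2, the stability polynomial Φ(z) = 1 + z + kz² satisfies |Φ(iy)| ≤ 1 for all y ∈ [0, 2], and |Φ(iy)| > 1 for y > 2. In particular, its key identity is |Φ(iy)|² = 1 + y³(y/2 − 1). -/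
open Complex

lemma key (y : ℝ) : ‖(1 + I * y + (1/2 + I/2) * (I * y)^2 : ℂ)‖ ^ 2 = 1 + y^3 * (y/2 - 1) := by
  rw [Complex.sq_norm]
  simp [Complex.normSq_apply, mul_pow, Complex.I_sq, ← Complex.ofReal_pow, Complex.add_re, Complex.add_im,
    Complex.mul_re, Complex.mul_im]
  ring

theorem optimal_complex_integrator_positive_axis :
    (∀ y : ℝ, y ∈ Set.Icc (0:ℝ) 2 →
      ‖(1 + I * y + (1/2 + I/2) * (I * y)^2 : ℂ)‖ ≤ 1) ∧
    (∀ y : ℝ, 2 < y → 1 < ‖(1 + I * y + (1/2 + I/2) * (I * y)^2 : ℂ)‖) ∧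
    ∀ y : ℝ, ‖(1 + I * y + (1/2 + I/2) * (I * y)^2 : ℂ)‖ ^ 2 = 1 + y^3 * (y/2 - 1) := by
  refine ⟨?_, ?_, key⟩
  · intro y hy
    rw [← pow_le_one_iff_of_nonneg (norm_nonneg _) two_ne_zero, key]
    nlinarith [mul_nonneg (pow_nonneg hy.1 3) (sub_nonneg.2 hy.2)]
  · intro y hy
    rw [← one_lt_pow_iff_of_nonneg (norm_nonneg _) two_ne_zero, key]
    nlinarith [mul_pos (pow_pos (lt_trans two_pos hy) 3) (show (0:ℝ) < y/2 - 1 by linarith)]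
end

section
/- For every complex k, if |1 + iy + k(iy)²| ≤ 1 for all y ∈ [0, Y] with Y > 0, then Y ≤ 2; and Y = 2 is achieved exactly for k = 1/2 + i/2. Hence the optimal 2-stage first-order stability polynomial for eigenvalues on the positive imaginary axis has a genuinely complex coefficient, and its stable interval is twice as long as the optimal real-coefficient interval [0, 1]. -/
open Complex

lemma two_stage_abs_sq (k : ℂ) (y : ℝ) :
    (‖1 + I * y + k * (I * y)^2‖)^2 =
      (1 - k.re * y^2)^2 + (y - k.im * y^2)^2 := by
  rw [Complex.sq_norm, Complex.normSq_apply]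
  simp [Complex.add_re, Complex.add_im, Complex.mul_re, Complex.mul_im, pow_two]
  ring

lemma two_stage_quad (k : ℂ) (Y : ℝ) (hY : 0 < Y)
    (h : ∀ y : ℝ, y ∈ Set.Icc 0 Y → ‖1 + I * y + k * (I * y)^2‖ ≤ 1) :
    (1/2 ≤ k.re) ∧ (∀ y : ℝ, 0 < y → y ≤ Y →
      (k.re^2 + k.im^2) * y^2 - 2 * k.im * y + (1 - 2 * k.re) ≤ 0) := by
  set a := k.re with ha
  set b := k.im with hb
  have hq : ∀ y : ℝ, 0 < y → y ≤ Y →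
      (a^2 + b^2) * y^2 - 2 * b * y + (1 - 2 * a) ≤ 0 := by
    intro y hy hyY
    have h1 := h y ⟨le_of_lt hy, hyY⟩
    have habs : (0:ℝ) ≤ ‖1 + I * y + k * (I * y)^2‖ :=
      norm_nonneg _
    have h2 : (1 - a * y^2)^2 + (y - b * y^2)^2 ≤ 1 := by
      rw [← two_stage_abs_sq]
      nlinarith
    have h3 : y^2 * ((a^2 + b^2) * y^2 - 2 * b * y + (1 - 2 * a)) ≤ 0 := by
      nlinarith
    by_contra hq'
    push_neg at hq'
    exact absurd (mul_pos (pow_pos hy 2) hq') (not_lt.mpr h3)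
  refine ⟨?_, hq⟩
  by_contra ha'
  push_neg at ha'
  set ε : ℝ := min Y ((1/2 - a) / (|b| + 1)) with hε
  have hbpos : (0:ℝ) < |b| + 1 := by positivity
  have hεpos : 0 < ε := by
    apply lt_min hY
    apply div_pos (by linarith) hbpos
  have hεY : ε ≤ Y := min_le_left _ _
  have hεle : ε * (|b| + 1) ≤ 1/2 - a := by
    have := min_le_right Y ((1/2 - a) / (|b| + 1))
    calc ε * (|b| + 1) ≤ ((1/2 - a) / (|b| + 1)) * (|b| + 1) := by
          exact mul_le_mul_of_nonneg_right this (le_of_lt hbpos)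
      _ = 1/2 - a := by field_simp
  have hbε : b * ε ≤ |b| * ε :=
    mul_le_mul_of_nonneg_right (le_abs_self b) (le_of_lt hεpos)
  have hquad := hq ε hεpos hεY
  nlinarith [sq_nonneg (a * ε), sq_nonneg (b * ε), hεpos, hbε, hεle]

theorem optimal_two_stage_first_order :
    (∀ (k : ℂ) (Y : ℝ), 0 < Y →
      (∀ y : ℝ, y ∈ Set.Icc 0 Y → ‖1 + I * y + k * (I * y)^2‖ ≤ 1) → Y ≤ 2) ∧
    (∀ k : ℂ,
      (∀ y : ℝ, y ∈ Set.Icc (0:ℝ) 2 → ‖1 + I * y + k * (I * y)^2‖ ≤ 1) ↔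
        k = 1/2 + I/2) := by
  constructor
  · intro k Y hY h
    by_contra hY2
    push_neg at hY2
    obtain ⟨ha, hq⟩ := two_stage_quad k Y hY h
    have h2 := hq 2 (by norm_num) (by linarith)
    have haeq : k.re = 1/2 := by nlinarith [sq_nonneg (2 * k.im - 1), sq_nonneg (2 * k.re - 1)]
    have hbeq : k.im = 1/2 := by nlinarith [sq_nonneg (2 * k.im - 1), sq_nonneg (2 * k.re - 1)]
    have hYq := hq Y hY le_rfl
    rw [haeq, hbeq] at hYq
    nlinarith
  · intro k
    constructor
    · intro h
      obtain ⟨ha, hq⟩ := two_stage_quad k 2 (by norm_num) h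
      have h2 := hq 2 (by norm_num) le_rfl
      have haeq : k.re = 1/2 := by nlinarith [sq_nonneg (2 * k.im - 1), sq_nonneg (2 * k.re - 1)]
      have hbeq : k.im = 1/2 := by nlinarith [sq_nonneg (2 * k.im - 1), sq_nonneg (2 * k.re - 1)]
      apply Complex.ext
      · simpa using haeq
      · simpa using hbeq
    · intro hk y hy
      obtain ⟨hy0, hy2⟩ := hy
      have hre : k.re = 1/2 := by rw [hk]; simp
      have him : k.im = 1/2 := by rw [hk]; simp
      have habs : (0:ℝ) ≤ ‖1 + I * y + k * (I * y)^2‖ :=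
        norm_nonneg _
      have hsq := two_stage_abs_sq k y
      rw [hre, him] at hsq
      nlinarith [mul_nonneg (mul_nonneg (mul_nonneg hy0 hy0) hy0) (by linarith : (0:ℝ) ≤ 2 - y)]
end

section
/- With k = 1/2 − i/2, the polynomial Φ(z) = 1 + z + kz² satisfies |Φ(−iy)| ≤ 1 for all y ∈ [0, 2]. -/
open Complex

theorem optimal_complex_integrator_negative_axis :
    ∀ y : ℝ, y ∈ Set.Icc (0:ℝ) 2 →
      ‖(1 + (-(I * y)) + (1/2 - I/2) * (-(I * y))^2 : ℂ)‖ ≤ 1 := by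
  intro y hy
  obtain ⟨h0, h2⟩ := hy
  have he : (1 + (-(I * (y:ℂ))) + (1/2 - I/2) * (-(I * y))^2)
      = ((1 - y^2/2 : ℝ) : ℂ) + ((y^2/2 - y : ℝ) : ℂ) * I := by
    push_cast
    linear_combination ((1/2 - I/2) * (y:ℂ)^2) * Complex.I_sq
  rw [he, ← Complex.mk_eq_add_mul_I, Complex.norm_def, Complex.normSq_mk]
  have h : (1 - y^2/2) * (1 - y^2/2) + (y^2/2 - y) * (y^2/2 - y) ≤ 1 := by
    nlinarith [mul_nonneg (mul_nonneg h0 h0) (mul_nonneg h0 (sub_nonneg.2 h2))]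
  calc Real.sqrt _ ≤ Real.sqrt 1 := Real.sqrt_le_sqrt h
    _ = 1 := Real.sqrt_one
end
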